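/- Let Y be a real-valued random variable, E an event, and Z ~ Lap(b) independent of (Y, E). Suppose conditional on E and on its complement, the possible values of Y lie within an interval of length at most Δ₁ (i.e., |Y(ω) − Y(ω')| ≤ Δ₁ whenever the conditioning variables agree on a common set), and additionally the conditioning events satisfy a likelihood-ratio bound: P(V = v | E) ≤ e^{λ} P(V = v | E^c) for an auxiliary variable V with Y measurable given V up to change Δ₁. If b ≥ Δ₁/(ε − λ) with λ < ε, then for all measurable T, P(Y + Z ∈ T | E) ≤ e^ε P(Y + Z ∈ T | E^c). -/

import Mathlib

open MeasureTheory ProbabilityTheory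
open scoped ENNReal

/-- The Laplace measure on `ℝ` with scale `b`, with density `(1/2b) exp(-|z|/b)`. -/
noncomputable def laplaceMeasure (b : ℝ) : Measure ℝ :=
  volume.withDensity (fun z => ENNReal.ofReal ((1 / (2 * b)) * Real.exp (-|z| / b)))

lemma laplace_density_measurable (b : ℝ) :
    Measurable fun z : ℝ => ENNReal.ofReal ((1 / (2 * b)) * Real.exp (-|z| / b)) := by
  apply Measurable.ennreal_ofReal
  fun_prop

/-- Laplace shift lemma: translating a set by at most `Δ₁` changes its Laplace mass by a
factor of at most `exp (Δ₁ / b)`. -/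
lemma laplace_shift {b Δ₁ : ℝ} (hb : 0 < b) {T : Set ℝ} (hT : MeasurableSet T)
    {s t : ℝ} (hst : |s - t| ≤ Δ₁) :
    laplaceMeasure b {z | s + z ∈ T} ≤
      ENNReal.ofReal (Real.exp (Δ₁ / b)) * laplaceMeasure b {z | t + z ∈ T} := by
  set d : ℝ → ℝ≥0∞ := fun z => ENNReal.ofReal ((1 / (2 * b)) * Real.exp (-|z| / b)) with hd
  have hdm : Measurable d := laplace_density_measurable b
  have hms : MeasurableSet {z : ℝ | s + z ∈ T} := (measurable_const_add s) hT
  have hmt : MeasurableSet {z : ℝ | t + z ∈ T} := (measurable_const_add t) hT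
  rw [laplaceMeasure, withDensity_apply _ hms, withDensity_apply _ hmt,
    ← lintegral_indicator hms, ← lintegral_indicator hmt]
  have htrans : ∫⁻ z, Set.indicator {z : ℝ | s + z ∈ T} d z
      = ∫⁻ z, Set.indicator {z : ℝ | s + z ∈ T} d (z + (t - s)) := by
    rw [lintegral_add_right_eq_self (fun z => Set.indicator {z : ℝ | s + z ∈ T} d z) (t - s)]
  rw [htrans, ← lintegral_const_mul _ (hdm.indicator hmt)]
  refine lintegral_mono fun z => ?_
  have hiff : z + (t - s) ∈ {z : ℝ | s + z ∈ T} ↔ z ∈ {z : ℝ | t + z ∈ T} := by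
    simp only [Set.mem_setOf_eq]
    rw [show s + (z + (t - s)) = t + z by ring]
  by_cases hz : z ∈ {z : ℝ | t + z ∈ T}
  · rw [Set.indicator_of_mem (hiff.mpr hz), Set.indicator_of_mem hz, hd]
    simp only
    rw [← ENNReal.ofReal_mul (Real.exp_nonneg _)]
    apply ENNReal.ofReal_le_ofReal
    rw [show Real.exp (Δ₁ / b) * (1 / (2 * b) * Real.exp (-|z| / b))
        = 1 / (2 * b) * Real.exp (Δ₁ / b + -|z| / b) by rw [Real.exp_add]; ring]
    have h1 : 0 ≤ 1 / (2 * b) := by positivity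
    refine mul_le_mul_of_nonneg_left (Real.exp_le_exp.mpr ?_) h1
    have h2 := abs_sub_abs_le_abs_sub z (z + (t - s))
    rw [show z - (z + (t - s)) = s - t by ring] at h2
    rw [← add_div, div_le_div_iff_of_pos_right hb]
    linarith
  · rw [Set.indicator_of_notMem (fun h => hz (hiff.mp h)), Set.indicator_of_notMem hz,
      mul_zero]

set_option maxHeartbeats 1000000 in
/-- abstract privacy proof of the Attribute-Private Markov Quilt
Mechanism. `Y` is the query value, `E` the secret event, `V` the auxiliary (quilt)
variable. `Y` is determined by `V` up to sensitivity `Δ₁`, the likelihood ratio of `V`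
between `E` and `Eᶜ` is bounded by `e^λ` (max-influence), and independent Laplace noise
`Z ~ Lap(b)` with `b ≥ Δ₁/(ε - λ)` is added; then the output distributions conditioned
on `E` and `Eᶜ` satisfy `P(Y + Z ∈ T | E) ≤ e^ε P(Y + Z ∈ T | Eᶜ)`. (Independence of
`Z` from `(Y, E)` is expressed by convolving the conditional law of `Y` with the
Laplace measure.) -/
theorem markov_quilt_privacy
    {Ω α : Type*} [MeasurableSpace Ω] [MeasurableSpace α] [Countable α]
    [MeasurableSingletonClass α]
    (P : Measure Ω) [IsProbabilityMeasure P]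
    (Y : Ω → ℝ) (hY : Measurable Y) (V : Ω → α) (hV : Measurable V)
    (E : Set Ω) (hE : MeasurableSet E)
    (hEpos : P E ≠ 0) (hEcpos : P Eᶜ ≠ 0)
    (Δ₁ lam ε b : ℝ) (hΔ₁ : 0 ≤ Δ₁) (hlam : 0 ≤ lam) (hlamε : lam < ε)
    (hb : b ≥ Δ₁ / (ε - lam)) (hbpos : 0 < b)
    (hsens : ∀ ω ω', V ω = V ω' → |Y ω - Y ω'| ≤ Δ₁)
    (hratio : ∀ v : α, P[|E] (V ⁻¹' {v}) ≤
      ENNReal.ofReal (Real.exp lam) * P[|Eᶜ] (V ⁻¹' {v})) :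
    ∀ T : Set ℝ, MeasurableSet T →
      (Measure.conv ((P[|E]).map Y) (laplaceMeasure b)) T ≤
        ENNReal.ofReal (Real.exp ε) *
          (Measure.conv ((P[|Eᶜ]).map Y) (laplaceMeasure b)) T := by
  intro T hT
  set L : Measure ℝ := laplaceMeasure b with hL
  have hSF : SFinite L := by rw [hL, laplaceMeasure]; infer_instance
  have hPE : IsProbabilityMeasure (P[|E]) := cond_isProbabilityMeasure hEpos
  have hPEc : IsProbabilityMeasure (P[|Eᶜ]) := cond_isProbabilityMeasure hEcpos
  have hadd : Measurable fun p : ℝ × ℝ => p.1 + p.2 := measurable_add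
  set S : Set (ℝ × ℝ) := (fun p : ℝ × ℝ => p.1 + p.2) ⁻¹' T with hSdef
  have hS : MeasurableSet S := hadd hT
  set g : ℝ → ℝ≥0∞ := fun y => L (Prod.mk y ⁻¹' S) with hg
  have hgval : ∀ y : ℝ, g y = laplaceMeasure b {z | y + z ∈ T} := fun y => rfl
  have hgm : Measurable g := measurable_measure_prodMk_left (ν := L) hS
  -- the convolution applied to T is the lintegral of g ∘ Y
  have hconv : ∀ (Q : Measure Ω), IsProbabilityMeasure Q →
      (Measure.conv (Q.map Y) L) T = ∫⁻ ω, g (Y ω) ∂Q := by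
    intro Q hQ
    rw [Measure.conv, Measure.map_apply hadd hT, Measure.prod_apply hS]
    exact lintegral_map hgm hY
  -- the fibers of V partition Ω
  have hfib : ∀ v : α, MeasurableSet (V ⁻¹' {v}) := fun v => hV (measurableSet_singleton v)
  have hpart : ∀ (Q : Measure Ω),
      ∫⁻ ω, g (Y ω) ∂Q = ∑' v : α, ∫⁻ ω in V ⁻¹' {v}, g (Y ω) ∂Q := by
    intro Q
    have hunion : (⋃ v : α, V ⁻¹' {v}) = Set.univ := by
      ext ω; simp
    have hdisj : Pairwise (Function.onFun Disjoint fun v : α => V ⁻¹' {v}) := by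
      intro i j hij
      exact Set.disjoint_left.mpr fun ω hi hj => hij (hi.symm.trans hj)
    rw [← setLIntegral_univ, ← hunion, lintegral_iUnion hfib hdisj]
  -- key constants
  have hεlam : (0:ℝ) < ε - lam := by linarith
  have hΔb : Δ₁ / b ≤ ε - lam := by
    rw [div_le_iff₀ hbpos]
    calc Δ₁ = Δ₁ / (ε - lam) * (ε - lam) := by field_simp
    _ ≤ b * (ε - lam) := mul_le_mul_of_nonneg_right hb (le_of_lt hεlam)
    _ = (ε - lam) * b := mul_comm _ _
  set c : ℝ≥0∞ := ENNReal.ofReal (Real.exp (Δ₁ / b)) with hc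
  set el : ℝ≥0∞ := ENNReal.ofReal (Real.exp lam) with hel
  have hcne : c ≠ 0 := by
    rw [hc, ← ENNReal.ofReal_zero, Ne, ENNReal.ofReal_eq_ofReal_iff (Real.exp_nonneg _) le_rfl]
    exact (Real.exp_pos _).ne'
  have hcnetop : c ≠ ⊤ := ENNReal.ofReal_ne_top
  -- per-fiber bound
  have key : ∀ v : α, ∫⁻ ω in V ⁻¹' {v}, g (Y ω) ∂(P[|E]) ≤
      ENNReal.ofReal (Real.exp ε) * ∫⁻ ω in V ⁻¹' {v}, g (Y ω) ∂(P[|Eᶜ]) := by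
    intro v
    set I : ℝ≥0∞ := ⨅ (ω' : Ω) (_ : V ω' = v), g (Y ω') with hI
    have hub : ∀ ω ∈ V ⁻¹' {v}, g (Y ω) ≤ c * I := by
      intro ω hω
      have h1 : ∀ ω', V ω' = v → g (Y ω) ≤ c * g (Y ω') := by
        intro ω' hω'
        rw [hgval, hgval]
        exact laplace_shift hbpos hT (hsens ω ω' (hω.trans hω'.symm))
      have h2 : g (Y ω) / c ≤ I := by
        refine le_iInf fun ω' => le_iInf fun hω' => ?_
        exact ENNReal.div_le_of_le_mul ((h1 ω' hω').trans_eq (mul_comm _ _))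
      calc g (Y ω) = g (Y ω) / c * c := by
            rw [ENNReal.div_mul_cancel hcne hcnetop]
      _ ≤ I * c := mul_le_mul_left h2 c
      _ = c * I := mul_comm _ _
    have hlb : I * (P[|Eᶜ]) (V ⁻¹' {v}) ≤ ∫⁻ ω in V ⁻¹' {v}, g (Y ω) ∂(P[|Eᶜ]) := by
      calc I * (P[|Eᶜ]) (V ⁻¹' {v}) = ∫⁻ _ in V ⁻¹' {v}, I ∂(P[|Eᶜ]) := by
            rw [setLIntegral_const]
      _ ≤ ∫⁻ ω in V ⁻¹' {v}, g (Y ω) ∂(P[|Eᶜ]) := by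
            refine setLIntegral_mono (hgm.comp hY) fun ω hω => ?_
            exact iInf_le_of_le ω (iInf_le_of_le hω le_rfl)
    calc ∫⁻ ω in V ⁻¹' {v}, g (Y ω) ∂(P[|E])
        ≤ ∫⁻ _ in V ⁻¹' {v}, c * I ∂(P[|E]) := setLIntegral_mono measurable_const hub
    _ = c * I * (P[|E]) (V ⁻¹' {v}) := setLIntegral_const _ _
    _ ≤ c * I * (el * (P[|Eᶜ]) (V ⁻¹' {v})) := mul_le_mul_right (hratio v) _
    _ = c * el * (I * (P[|Eᶜ]) (V ⁻¹' {v})) := by ring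
    _ ≤ c * el * ∫⁻ ω in V ⁻¹' {v}, g (Y ω) ∂(P[|Eᶜ]) := mul_le_mul_right hlb _
    _ ≤ ENNReal.ofReal (Real.exp ε) * ∫⁻ ω in V ⁻¹' {v}, g (Y ω) ∂(P[|Eᶜ]) := by
        refine mul_le_mul_left ?_ _
        rw [hc, hel, ← ENNReal.ofReal_mul (Real.exp_nonneg _), ← Real.exp_add]
        exact ENNReal.ofReal_le_ofReal (Real.exp_le_exp.mpr (by linarith))
  -- combine
  rw [hconv _ hPE, hconv _ hPEc, hpart, hpart, ← ENNReal.tsum_mul_left]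
  exact ENNReal.tsum_le_tsum key
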